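/- Let (σₙ,τ₀ₙ,τ₁ₙ)_{n≥0} be an arbitrary sequence of triples of permutations in S₃ and let i : ℕ → {0,1} be any sequence. Suppose there is a constant C > 0 such that for every n ≥ 0 and every pair j, j' ∈ {1,2,3} one has x_{n,j} ≤ C·x_{n,j'}. If v ∈ ℝ³ is a column of Mₙ, then for every integer k > 2C², v is not equal to any column of M_{n+k}. -/

import Mathlib

open Matrix

noncomputable section

/-- `A₀ = ![![0,0,1],![1,0,0],![0,1,1]]`. -/
def A0 : Matrix (Fin 3) (Fin 3) ℝ := !![0,0,1; 1,0,0; 0,1,1]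
/-- `A₁ = ![![1,0,1],![0,1,0],![0,0,1]]`. -/
def A1 : Matrix (Fin 3) (Fin 3) ℝ := !![1,0,1; 0,1,0; 0,0,1]
/-- `B = ![![1,1,1],![0,1,1],![0,0,1]]`. -/
def Bm : Matrix (Fin 3) (Fin 3) ℝ := !![1,1,1; 0,1,1; 0,0,1]

/-- The permutation matrix of `ρ`: entry `(i,j)` is `1` iff `ρ i = j`.  In particular
`P (finRotate 3)`, the matrix of the cycle `(1 2 3)`, is `![![0,1,0],![0,0,1],![1,0,0]]`. -/
def P (ρ : Equiv.Perm (Fin 3)) : Matrix (Fin 3) (Fin 3) ℝ := ρ.permMatrix ℝ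

/-- The pair of TRIP matrices `F₀ = P_σ·A₀·P_{τ₀}`, `F₁ = P_σ·A₁·P_{τ₁}` of a triple
of permutations, as a function `Fin 2 → Matrix`. -/
def Fmat (σ τ0 τ1 : Equiv.Perm (Fin 3)) : Fin 2 → Matrix (Fin 3) (Fin 3) ℝ :=
  ![P σ * A0 * P τ0, P σ * A1 * P τ1]

/-- `prodMat G n = B · (G 0) · (G 1) ⋯ (G n)`. -/
def prodMat (G : ℕ → Matrix (Fin 3) (Fin 3) ℝ) (n : ℕ) : Matrix (Fin 3) (Fin 3) ℝ :=
  Bm * ((List.range (n+1)).map G).prod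

/-- The triangle `Δ(i₀,…,iₙ)`: the convex hull of the images under
`π(x₀,x₁,x₂) = (x₁/x₀, x₂/x₀)` of the three columns of `M`. -/
def tri (M : Matrix (Fin 3) (Fin 3) ℝ) : Set (ℝ × ℝ) :=
  convexHull ℝ {p | ∃ j : Fin 3, p = (M 1 j / M 0 j, M 2 j / M 0 j)}

/-- `Δ(i₀,i₁,…) = ⋂ₙ Δ(i₀,…,iₙ)`, for the sequence of matrices `G m = F_{i_m}`. -/
def DeltaInf (G : ℕ → Matrix (Fin 3) (Fin 3) ℝ) : Set (ℝ × ℝ) :=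
  ⋂ n : ℕ, tri (prodMat G n)

/- ### Auxiliary lemmas -/

lemma PAQ (ρ τ : Equiv.Perm (Fin 3)) (A : Matrix (Fin 3) (Fin 3) ℝ) :
    P ρ * A * P τ = A.submatrix ρ τ.symm := by
  show ρ.toPEquiv.toMatrix * A * τ.toPEquiv.toMatrix = _
  rw [PEquiv.toMatrix_toPEquiv_mul, PEquiv.mul_toMatrix_toPEquiv,
    Matrix.submatrix_submatrix]
  simp

lemma Fmat_submatrix (σ' τ0' τ1' : Equiv.Perm (Fin 3)) (b : Fin 2) :
    ∃ (A : Matrix (Fin 3) (Fin 3) ℝ) (τ : Equiv.Perm (Fin 3)),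
      (A = A0 ∨ A = A1) ∧ Fmat σ' τ0' τ1' b = A.submatrix σ' τ.symm := by
  fin_cases b
  · exact ⟨A0, τ0', Or.inl rfl, PAQ σ' τ0' A0⟩
  · exact ⟨A1, τ1', Or.inr rfl, PAQ σ' τ1' A1⟩

lemma A_facts (A : Matrix (Fin 3) (Fin 3) ℝ) (hA : A = A0 ∨ A = A1) :
    (∀ s t, 0 ≤ A s t) ∧ (∀ t, 1 ≤ ∑ s, A s t) ∧ (∀ s, 1 ≤ ∑ t, A s t) ∧
      (∑ s, ∑ t, A s t = 4) := by
  rcases hA with rfl | rfl <;>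
    refine ⟨fun s t => ?_, fun t => ?_, fun s => ?_, ?_⟩ <;>
    first
      | (fin_cases s <;> fin_cases t <;>
          norm_num [A0, A1, Matrix.vecHead, Matrix.vecTail, Matrix.cons_val_two])
      | (fin_cases t <;>
          norm_num [A0, A1, Fin.sum_univ_three, Matrix.vecHead, Matrix.vecTail, Matrix.cons_val_two])
      | (fin_cases s <;>
          norm_num [A0, A1, Fin.sum_univ_three, Matrix.vecHead, Matrix.vecTail, Matrix.cons_val_two])
      | norm_num [A0, A1, Fin.sum_univ_three, Matrix.vecHead, Matrix.vecTail, Matrix.cons_val_two]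

lemma Fmat_nonneg (σ' τ0' τ1' : Equiv.Perm (Fin 3)) (b : Fin 2) (s t : Fin 3) :
    0 ≤ Fmat σ' τ0' τ1' b s t := by
  obtain ⟨A, τ, hA, hF⟩ := Fmat_submatrix σ' τ0' τ1' b
  rw [hF]
  exact (A_facts A hA).1 _ _

lemma Fmat_colsum (σ' τ0' τ1' : Equiv.Perm (Fin 3)) (b : Fin 2) (t : Fin 3) :
    1 ≤ ∑ s, Fmat σ' τ0' τ1' b s t := by
  obtain ⟨A, τ, hA, hF⟩ := Fmat_submatrix σ' τ0' τ1' b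
  rw [hF]
  simp only [Matrix.submatrix_apply]
  rw [Equiv.sum_comp σ' (fun s => A s (τ.symm t))]
  exact (A_facts A hA).2.1 _

lemma Fmat_rowsum (σ' τ0' τ1' : Equiv.Perm (Fin 3)) (b : Fin 2) (s : Fin 3) :
    1 ≤ ∑ t, Fmat σ' τ0' τ1' b s t := by
  obtain ⟨A, τ, hA, hF⟩ := Fmat_submatrix σ' τ0' τ1' b
  rw [hF]
  simp only [Matrix.submatrix_apply]
  rw [Equiv.sum_comp τ.symm (fun t => A (σ' s) t)]
  exact (A_facts A hA).2.2.1 _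

lemma Fmat_totsum (σ' τ0' τ1' : Equiv.Perm (Fin 3)) (b : Fin 2) :
    ∑ s, ∑ t, Fmat σ' τ0' τ1' b s t = 4 := by
  obtain ⟨A, τ, hA, hF⟩ := Fmat_submatrix σ' τ0' τ1' b
  rw [hF]
  simp only [Matrix.submatrix_apply]
  have h1 : ∀ s : Fin 3, ∑ t, A (σ' s) (τ.symm t) = ∑ t, A (σ' s) t :=
    fun s => Equiv.sum_comp τ.symm (fun t => A (σ' s) t)
  rw [Finset.sum_congr rfl (fun s _ => h1 s),
    Equiv.sum_comp σ' (fun s => ∑ t, A s t)]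
  exact (A_facts A hA).2.2.2

lemma prodMat_zero (G : ℕ → Matrix (Fin 3) (Fin 3) ℝ) : prodMat G 0 = Bm * G 0 := by
  simp [prodMat, List.range_succ]

lemma prodMat_succ (G : ℕ → Matrix (Fin 3) (Fin 3) ℝ) (m : ℕ) :
    prodMat G (m+1) = prodMat G m * G (m+1) := by
  rw [prodMat, prodMat, List.range_succ, List.map_append, List.prod_append]
  simp [Matrix.mul_assoc]

/-- Lemma 7.3 ("change of vertex"): if the ratios of the first-row entries of the
matrices `Mₙ = B·F_{0,i₀}⋯F_{n,iₙ}` are uniformly bounded by `C`, then a column of `Mₙ`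
cannot remain a column of `M_{n+k}` for any `k > 2C²`. -/
theorem column_changes
    (σ τ0 τ1 : ℕ → Equiv.Perm (Fin 3)) (i : ℕ → Fin 2) (C : ℝ) (hC : 0 < C)
    (hbound : ∀ n : ℕ, ∀ j j' : Fin 3,
      prodMat (fun m => Fmat (σ m) (τ0 m) (τ1 m) (i m)) n 0 j ≤
        C * prodMat (fun m => Fmat (σ m) (τ0 m) (τ1 m) (i m)) n 0 j')
    (n : ℕ) (v : Fin 3 → ℝ) (j : Fin 3)
    (hv : v = fun r => prodMat (fun m => Fmat (σ m) (τ0 m) (τ1 m) (i m)) n r j)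
    (k : ℕ) (hk : 2 * C ^ 2 < (k : ℝ)) (j' : Fin 3) :
    v ≠ fun r => prodMat (fun m => Fmat (σ m) (τ0 m) (τ1 m) (i m)) (n + k) r j' := by
  set G : ℕ → Matrix (Fin 3) (Fin 3) ℝ := fun m => Fmat (σ m) (τ0 m) (τ1 m) (i m)
    with hGdef
  set x : ℕ → Fin 3 → ℝ := fun m s => prodMat G m 0 s with hxdef
  -- basic facts about the matrices G m
  have hGnn : ∀ m s t, 0 ≤ G m s t := fun m => Fmat_nonneg _ _ _ _
  have hGcol : ∀ m t, 1 ≤ ∑ s, G m s t := fun m => Fmat_colsum _ _ _ _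
  have hGrow : ∀ m s, 1 ≤ ∑ t, G m s t := fun m => Fmat_rowsum _ _ _ _
  have hGtot : ∀ m, ∑ s, ∑ t, G m s t = 4 := fun m => Fmat_totsum _ _ _ _
  -- recursion for the first row
  have hx0 : ∀ t, x 0 t = ∑ s, G 0 s t := by
    intro t
    rw [hxdef]
    simp only [prodMat_zero, Matrix.mul_apply]
    refine Finset.sum_congr rfl fun s _ => ?_
    have : Bm 0 s = 1 := by fin_cases s <;> norm_num [Bm]
    rw [this, one_mul]
  have hxsucc : ∀ m t, x (m+1) t = ∑ s, x m s * G (m+1) s t := by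
    intro m t
    rw [hxdef]
    simp only [prodMat_succ, Matrix.mul_apply]
  -- step lower bound
  have step : ∀ (m : ℕ) (t : Fin 3) (c : ℝ), 0 ≤ c → (∀ s, c ≤ x m s) →
      c ≤ x (m+1) t := by
    intro m t c hc h
    calc c = c * 1 := (mul_one c).symm
      _ ≤ c * ∑ s, G (m+1) s t := by
          exact mul_le_mul_of_nonneg_left (hGcol (m+1) t) hc
      _ = ∑ s, c * G (m+1) s t := Finset.mul_sum _ _ _
      _ ≤ ∑ s, x m s * G (m+1) s t :=
          Finset.sum_le_sum fun s _ => mul_le_mul_of_nonneg_right (h s) (hGnn (m+1) s t)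
      _ = x (m+1) t := (hxsucc m t).symm
  -- positivity
  have hpos : ∀ m s, 0 < x m s := by
    intro m
    induction m with
    | zero =>
      intro s
      have h1 : (1:ℝ) ≤ x 0 s := by rw [hx0 s]; exact hGcol 0 s
      linarith
    | succ m ih =>
      intro s
      have hc : 0 < min (min (x m 0) (x m 1)) (x m 2) :=
        lt_min (lt_min (ih 0) (ih 1)) (ih 2)
      have := step m s _ hc.le (by
        intro s'
        fin_cases s'
        · exact le_trans (min_le_left _ _) (min_le_left _ _)
        · exact le_trans (min_le_left _ _) (min_le_right _ _)
        · exact min_le_right _ _)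
      linarith
  -- the uniform lower bound  c0 = x n j / C
  set c0 : ℝ := x n j / C with hc0def
  have hc0 : 0 < c0 := div_pos (hpos n j) hC
  have hlow0 : ∀ s, c0 ≤ x n s := by
    intro s
    rw [hc0def, div_le_iff₀ hC]
    calc x n j ≤ C * x n s := hbound n j s
      _ = x n s * C := mul_comm _ _
  have hlow : ∀ t s, c0 ≤ x (n + t) s := by
    intro t
    induction t with
    | zero => exact hlow0
    | succ t ih => exact fun s => step (n + t) s c0 hc0.le ih
  -- sum growth
  set S : ℕ → ℝ := fun m => ∑ s, x m s with hSdef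
  have hSstep : ∀ t : ℕ, S (n + t) + c0 ≤ S (n + t + 1) := by
    intro t
    have hrec : S (n + t + 1) = ∑ s, x (n + t) s * ∑ u, G (n + t + 1) s u := by
      rw [hSdef]
      simp only
      rw [Finset.sum_congr rfl fun u _ => hxsucc (n + t) u, Finset.sum_comm]
      exact Finset.sum_congr rfl fun s _ => (Finset.mul_sum _ _ _).symm
    have hR1 : ∀ s : Fin 3, 1 ≤ ∑ u, G (n + t + 1) s u := hGrow (n + t + 1)
    have hR4 : ∑ s, ∑ u, G (n + t + 1) s u = 4 := hGtot (n + t + 1)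
    have key : ∀ s : Fin 3,
        c0 * ((∑ u, G (n + t + 1) s u) - 1) ≤ x (n + t) s * ((∑ u, G (n + t + 1) s u) - 1) :=
      fun s => mul_le_mul_of_nonneg_right (hlow t s) (by linarith [hR1 s])
    have e1 := key 0; have e2 := key 1; have e3 := key 2
    rw [hrec, hSdef]
    simp only [Fin.sum_univ_three] at hR4 e1 e2 e3 ⊢
    nlinarith [hlow t 0, hlow t 1, hlow t 2]
  have hSgrow : ∀ t : ℕ, S n + t * c0 ≤ S (n + t) := by
    intro t
    induction t with
    | zero => simp
    | succ t ih =>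
      have := hSstep t
      push_cast
      have h2 : S n + t * c0 + c0 ≤ S (n + t) + c0 := by linarith
      calc S n + (t + 1) * c0 = S n + t * c0 + c0 := by ring
        _ ≤ S (n + t) + c0 := h2
        _ ≤ S (n + (t + 1)) := by
            have : n + (t + 1) = n + t + 1 := by omega
            rw [this]; exact hSstep t
  -- conclusion
  intro heq
  rw [hv] at heq
  have hX : x n j = x (n + k) j' := congrFun heq 0
  have hSnk_low : S n + k * c0 ≤ S (n + k) := hSgrow k
  have hSn_ge : x n j ≤ S n :=
    Finset.single_le_sum (fun s _ => (hpos n s).le) (Finset.mem_univ j)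
  have hSnk_up : S (n + k) ≤ x (n + k) j' + 2 * (C * x (n + k) j') := by
    have hb : ∀ s : Fin 3, x (n + k) s ≤ C * x (n + k) j' := fun s => hbound (n + k) s j'
    have hcard : (Finset.univ.erase j').card = 2 := by
      rw [Finset.card_erase_of_mem (Finset.mem_univ _)]
      simp
    have h1 : S (n + k) = x (n + k) j' + ∑ s ∈ Finset.univ.erase j', x (n + k) s :=
      (Finset.add_sum_erase _ _ (Finset.mem_univ j')).symm
    have h2 : ∑ s ∈ Finset.univ.erase j', x (n + k) s ≤ 2 * (C * x (n + k) j') := by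
      calc ∑ s ∈ Finset.univ.erase j', x (n + k) s
          ≤ ∑ _s ∈ Finset.univ.erase j', C * x (n + k) j' :=
            Finset.sum_le_sum fun s _ => hb s
        _ = 2 * (C * x (n + k) j') := by
            rw [Finset.sum_const, hcard]; simp [nsmul_eq_mul]
    linarith
  have hCX : c0 * C = x n j := div_mul_cancel₀ _ hC.ne'
  nlinarith [mul_pos (sub_pos.2 hk) hc0, hpos n j]
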